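/- Let (V, g) be a pseudo-Euclidean vector space of dimension n ≥ 4 and let W be an algebraic curvature tensor on V with the symmetries of a Weyl tensor (including vanishing Ricci trace), such that there exists a nonzero null vector u with W(u,·,·,·) = 0 and W(v,v',·,·) = 0 for all v, v' orthogonal to u. If additionally W(u',v,u',v') = 0 for all v, v' orthogonal to u, where u' is a null vector with g(u,u') = 1, then W = 0. -/
import Mathlib


/-- Let `(V,g)` be a pseudo-Euclidean vector space of dimension `n ≥ 4` and `W` an
algebraic curvature tensor with the symmetries of a Weyl tensor (including vanishing
Ricci trace, expressed via arbitrary pairs of `g`-biorthogonal bases).  If there is a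
nonzero null vector `u` with `W(u,·,·,·) = 0` and `W(v,v',·,·) = 0` for all `v, v' ⊥ u`,
and moreover `W(u',v,u',v') = 0` for all `v, v' ⊥ u`, where `u'` is a null vector with
`g(u,u') = 1`, then `W = 0`. -/
theorem stmt_6 {V : Type*} [AddCommGroup V] [Module ℝ V] [FiniteDimensional ℝ V]
    (n : ℕ) (hn : 4 ≤ n) (hdim : Module.finrank ℝ V = n)
    (g : V →ₗ[ℝ] V →ₗ[ℝ] ℝ)
    (hgsym : ∀ x y, g x y = g y x)
    (hgnd : ∀ x, (∀ y, g x y = 0) → x = 0)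
    (W : V →ₗ[ℝ] V →ₗ[ℝ] V →ₗ[ℝ] V →ₗ[ℝ] ℝ)
    (hskew₁ : ∀ x y z w, W x y z w = - W y x z w)
    (hpair : ∀ x y z w, W x y z w = W z w x y)
    (hbianchi : ∀ x y z w, W x y z w + W y z x w + W z x y w = 0)
    (htracefree : ∀ b b' : Fin n → V,
      (∀ i j, g (b i) (b' j) = if i = j then 1 else 0) →
      ∀ x w, ∑ i, W (b i) x w (b' i) = 0)
    (u : V) (hu0 : u ≠ 0) (hunull : g u u = 0)
    (huW : ∀ x y z, W u x y z = 0)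
    (hperp : ∀ v v', g u v = 0 → g u v' = 0 → ∀ z w, W v v' z w = 0)
    (u' : V) (hu'null : g u' u' = 0) (huu' : g u u' = 1)
    (hWu' : ∀ v v', g u v = 0 → g u v' = 0 → W u' v u' v' = 0) :
    W = 0 := by
  -- skew symmetry in the last pair
  have skew2 : ∀ x y z w, W x y z w = - W x y w z := by
    intro x y z w
    rw [hpair, hskew₁, hpair]
  have hself : ∀ x z w, W x x z w = 0 := by
    intro x z w
    have h := hskew₁ x x z w; linarith
  have hself2 : ∀ x y z, W x y z z = 0 := by
    intro x y z
    have h := skew2 x y z z; linarith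
  -- projection orthogonal to u
  have hp : ∀ x : V, g u (x - g u x • u') = 0 := by
    intro x
    simp [map_sub, map_smul, huu']
  have hdecomp : ∀ x : V, x = g u x • u' + (x - g u x • u') := by
    intro x; abel
  -- W u' b z w = 0 for b ⊥ u
  have hC : ∀ b, g u b = 0 → ∀ z w, W u' b z w = 0 := by
    intro b hb z w
    have h1 : W u' b u' u' = 0 := hself2 u' b u'
    have h2 : W u' b u' (w - g u w • u') = 0 := hWu' b _ hb (hp w)
    have h3 : W u' b (z - g u z • u') u' = 0 := by
      have h := skew2 u' b (z - g u z • u') u'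
      rw [hWu' b _ hb (hp z)] at h; linarith
    have h4 : W u' b (z - g u z • u') (w - g u w • u') = 0 := by
      rw [hpair]; exact hperp _ _ (hp z) (hp w) _ _
    calc W u' b z w
        = W u' b (g u z • u' + (z - g u z • u')) (g u w • u' + (w - g u w • u')) := by
          rw [← hdecomp z, ← hdecomp w]
      _ = 0 := by
          simp only [map_add, map_smul, LinearMap.add_apply, LinearMap.smul_apply,
            h1, h2, h3, h4, smul_eq_mul, mul_zero, add_zero, zero_add]
  -- W u' b z w = 0 for all b
  have hC' : ∀ b z w, W u' b z w = 0 := by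
    intro b z w
    calc W u' b z w = W u' (g u b • u' + (b - g u b • u')) z w := by rw [← hdecomp b]
      _ = 0 := by
          simp only [map_add, map_smul, LinearMap.add_apply, LinearMap.smul_apply,
            hself u', hC _ (hp b), smul_eq_mul, mul_zero, add_zero, zero_add]
  have main : ∀ x y z w, W x y z w = 0 := by
    intro x y z w
    have h1 : ∀ a z w, W a u' z w = 0 := by
      intro a z w
      have h := hskew₁ a u' z w
      rw [hC'] at h; linarith
    calc W x y z w
        = W (g u x • u' + (x - g u x • u')) (g u y • u' + (y - g u y • u')) z w := by
          rw [← hdecomp x, ← hdecomp y]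
      _ = 0 := by
          simp only [map_add, map_smul, LinearMap.add_apply, LinearMap.smul_apply,
            hC', h1, hperp _ _ (hp x) (hp y), smul_eq_mul, mul_zero, add_zero, zero_add]
  ext x y z w
  exact main x y z w
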